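/- If $\Re\beta \geq -1$, then $|\Gamma(\beta + 1/2)|^{-1} \leq C \exp(\pi |\Im\beta|)$ for some absolute constant $C$ independent of $\beta$. -/

import Mathlib

open Complex Real
lemma my_cosh_le (y : ℝ) : Real.cosh y ≤ Real.exp |y| := by
  rw [Real.cosh_eq]
  have h1 : Real.exp y ≤ Real.exp |y| := Real.exp_le_exp.2 (le_abs_self y)
  have h2 : Real.exp (-y) ≤ Real.exp |y| := Real.exp_le_exp.2 (neg_le_abs y)
  linarith

lemma my_sinh_le (y : ℝ) : |Real.sinh y| ≤ |y| * Real.exp |y| := by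
  rw [Real.abs_sinh]
  set t := |y| with ht
  have ht0 : 0 ≤ t := abs_nonneg y
  rw [Real.sinh_eq]
  have h1 : (-2*t) + 1 ≤ Real.exp (-2*t) := Real.add_one_le_exp _
  have h2 : Real.exp (-t) = Real.exp t * Real.exp (-2*t) := by
    rw [← Real.exp_add]; ring_nf
  have h3 : 0 < Real.exp t := Real.exp_pos t
  rw [h2]
  nlinarith [Real.exp_pos (-2*t)]

lemma my_abs_sin_le (x y : ℝ) :
    ‖Complex.sin (x + y*I)‖ ≤ ‖(x + y*I : ℂ)‖ * Real.exp |y| := by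
  have hz : Complex.sin (x + y*I)
      = ((Real.sin x * Real.cosh y : ℝ) : ℂ) + ((Real.cos x * Real.sinh y : ℝ) : ℂ) * I := by
    rw [Complex.sin_add, Complex.sin_mul_I, Complex.cos_mul_I]
    push_cast
    ring
  have hA : ‖(((Real.sin x * Real.cosh y : ℝ) : ℂ)
      + ((Real.cos x * Real.sinh y : ℝ) : ℂ) * I)‖ ^ 2
      = (Real.sin x * Real.cosh y)^2 + (Real.cos x * Real.sinh y)^2 := by
    rw [Complex.sq_norm, Complex.normSq_add_mul_I]
  have hB : ‖((x:ℂ) + (y:ℂ)*I)‖ ^ 2 = x^2 + y^2 := by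
    rw [Complex.sq_norm, Complex.normSq_add_mul_I]
  have hB' : (‖((x:ℂ) + (y:ℂ)*I)‖ * Real.exp |y|)^2 = (x^2 + y^2) * Real.exp |y| ^2 := by
    rw [mul_pow, hB]
  have key : ‖Complex.sin (x + y*I)‖^2 ≤ (‖((x:ℂ) + (y:ℂ)*I)‖ * Real.exp |y|)^2 := by
    rw [hz, hA, hB']
    have h1 : Real.sin x ^ 2 ≤ x ^ 2 := Real.sin_sq_le_sq
    have h2 : Real.cos x ^ 2 ≤ 1 := Real.cos_sq_le_one x
    have h3 : Real.cosh y ≤ Real.exp |y| := my_cosh_le y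
    have h4 : |Real.sinh y| ≤ |y| * Real.exp |y| := my_sinh_le y
    have h5 : Real.sinh y ^ 2 ≤ (|y| * Real.exp |y|)^2 := by
      rw [← _root_.sq_abs (Real.sinh y)]
      exact pow_le_pow_left₀ (abs_nonneg _) h4 2
    have h6 : Real.cosh y ^ 2 ≤ Real.exp |y| ^ 2 :=
      pow_le_pow_left₀ (Real.cosh_pos y).le h3 2
    have h7 : (0:ℝ) ≤ Real.exp |y| ^ 2 := sq_nonneg _
    nlinarith [sq_nonneg (Real.sin x), sq_nonneg (Real.cos x), _root_.sq_abs y, sq_nonneg y,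
      mul_nonneg (sq_nonneg y) h7]
  have h0 : (0:ℝ) ≤ ‖((x:ℂ) + (y:ℂ)*I)‖ * Real.exp |y| :=
    mul_nonneg (norm_nonneg _) (Real.exp_pos _).le
  calc ‖Complex.sin (x + y*I)‖ = Real.sqrt (‖Complex.sin (x + y*I)‖^2) :=
        (Real.sqrt_sq (norm_nonneg _)).symm
    _ ≤ Real.sqrt ((‖((x:ℂ) + (y:ℂ)*I)‖ * Real.exp |y|)^2) := Real.sqrt_le_sqrt key
    _ = _ := Real.sqrt_sq h0

lemma my_abs_sin_le' (z : ℂ) : ‖Complex.sin z‖ ≤ ‖z‖ * Real.exp |z.im| := by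
  have := my_abs_sin_le z.re z.im
  rwa [Complex.re_add_im] at this

lemma my_abs_Gamma_le (z : ℂ) (hz : 0 < z.re) : ‖Complex.Gamma z‖ ≤ Real.Gamma z.re := by
  rw [Complex.Gamma_eq_integral hz, Real.Gamma_eq_integral hz, Complex.GammaIntegral]
  refine (MeasureTheory.norm_integral_le_integral_norm _).trans (le_of_eq ?_)
  refine MeasureTheory.setIntegral_congr_fun measurableSet_Ioi fun x hx => ?_
  have hx' : (0:ℝ) < x := hx
  simp only [norm_mul, Complex.norm_real, Real.norm_eq_abs,
    Real.abs_exp]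
  rw [Complex.norm_cpow_eq_rpow_re_of_pos hx']
  simp [Complex.sub_re]

lemma my_Gamma_le_six {x : ℝ} (h1 : 1 ≤ x) (h4 : x ≤ 4) : Real.Gamma x ≤ 6 := by
  have hΓ1 : Real.Gamma 1 = 1 := Real.Gamma_one
  have hΓ4 : Real.Gamma 4 = 6 := by
    rw [show (4:ℝ) = (3:ℕ) + 1 by norm_num, Real.Gamma_nat_eq_factorial]
    norm_num [Nat.factorial]
  have hc := Real.convexOn_Gamma
  have hseg : x ∈ segment ℝ (1:ℝ) 4 := by
    rw [segment_eq_Icc (by norm_num : (1:ℝ) ≤ 4)]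
    exact ⟨h1, h4⟩
  have := hc.le_on_segment (by norm_num : (1:ℝ) ∈ Set.Ioi 0)
    (by norm_num : (4:ℝ) ∈ Set.Ioi 0) hseg
  rw [hΓ1, hΓ4] at this
  exact this.trans (by norm_num)

lemma my_strip_bound (w : ℂ) (hlo : -(1/2:ℝ) ≤ w.re) (hhi : w.re ≤ 2) :
    ‖Complex.Gamma w‖⁻¹ ≤ 12 * Real.exp (Real.pi * |w.im|) := by
  have hE : (1:ℝ) ≤ Real.exp (Real.pi * |w.im|) :=
    Real.one_le_exp (mul_nonneg Real.pi_pos.le (abs_nonneg _))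
  by_cases h0 : w = 0
  · simp [h0, Complex.Gamma_zero]
  by_cases h1 : w = 1
  · rw [h1, Complex.Gamma_one]
    simpa using hE.trans (by nlinarith)
  by_cases h2 : w = 2
  · have : Complex.Gamma 2 = 1 := by
      rw [show (2:ℂ) = 1 + 1 by norm_num, Complex.Gamma_add_one 1 one_ne_zero,
        Complex.Gamma_one, mul_one]
    rw [h2, this]
    simpa using hE.trans (by nlinarith)
  -- now w ∉ {0,1,2}
  have hsin : Complex.sin (↑Real.pi * w) ≠ 0 := by
    rw [Ne, Complex.sin_eq_zero_iff]
    rintro ⟨k, hk⟩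
    have hπ : (Real.pi : ℂ) ≠ 0 := Complex.ofReal_ne_zero.2 Real.pi_ne_zero
    have hw : w = (k : ℂ) := by
      apply mul_left_cancel₀ hπ
      rw [hk]; ring
    have hre : w.re = (k : ℝ) := by rw [hw]; simp
    have hk0 : (-1:ℤ) < k := by
      by_contra hc
      push_neg at hc
      have : (k:ℝ) ≤ -1 := by exact_mod_cast hc
      rw [hre] at hlo; linarith
    have hk2 : k ≤ 2 := by
      by_contra hc
      push_neg at hc
      have : (3:ℝ) ≤ (k:ℝ) := by exact_mod_cast hc
      rw [hre] at hhi; linarith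
    interval_cases k
    · exact h0 (by rw [hw]; norm_num)
    · exact h1 (by rw [hw]; norm_num)
    · exact h2 (by rw [hw]; norm_num)
  have hG : Complex.Gamma w ≠ 0 := by
    apply Complex.Gamma_ne_zero
    intro m hm
    have : w.re = -(m:ℝ) := by rw [hm]; simp
    rw [this] at hlo
    have : (m:ℝ) ≤ 1/2 := by linarith
    have hm0 : m = 0 := by
      by_contra hmne
      have h1m : (1:ℝ) ≤ (m:ℝ) := by exact_mod_cast Nat.one_le_iff_ne_zero.2 hmne
      linarith
    exact h0 (by rw [hm, hm0]; norm_num)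
  have hπ : (Real.pi : ℂ) ≠ 0 := Complex.ofReal_ne_zero.2 Real.pi_ne_zero
  have h1w : (1:ℂ) - w ≠ 0 := fun h => h1 (by linear_combination -h)
  have h2w : (2:ℂ) - w ≠ 0 := fun h => h2 (by linear_combination -h)
  have hG3 : Complex.Gamma (3 - w) = (2 - w) * ((1 - w) * Complex.Gamma (1 - w)) := by
    have e1 : Complex.Gamma (2 - w) = (1 - w) * Complex.Gamma (1 - w) := by
      have := Complex.Gamma_add_one (1 - w) h1w
      rwa [show (1:ℂ) - w + 1 = 2 - w by ring] at this
    have e2 : Complex.Gamma (3 - w) = (2 - w) * Complex.Gamma (2 - w) := by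
      have := Complex.Gamma_add_one (2 - w) h2w
      rwa [show (2:ℂ) - w + 1 = 3 - w by ring] at this
    rw [e2, e1]
  have refl' : Complex.Gamma w * Complex.Gamma (1 - w) * Complex.sin (↑Real.pi * w)
      = (Real.pi : ℂ) := (eq_div_iff hsin).1 (Complex.Gamma_mul_Gamma_one_sub w)
  have key : (Complex.Gamma w)⁻¹
      = Complex.Gamma (3 - w) * Complex.sin (↑Real.pi * w)
        / ((Real.pi : ℂ) * ((1 - w) * (2 - w))) := by
    rw [hG3]
    rw [eq_div_iff (mul_ne_zero hπ (mul_ne_zero h1w h2w))]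
    have hinv : (Complex.Gamma w)⁻¹ * Complex.Gamma w = 1 := inv_mul_cancel₀ hG
    linear_combination (-(Complex.Gamma w)⁻¹ * ((1:ℂ)-w)*(2-w)) * refl'
      + ((1-w)*(2-w)*Complex.Gamma (1-w)*Complex.sin (↑Real.pi * w)) * hinv
  have hnorm : ‖Complex.Gamma w‖⁻¹
      = ‖Complex.Gamma (3 - w)‖ * ‖Complex.sin (↑Real.pi * w)‖
        / (Real.pi * (‖(1:ℂ) - w‖ * ‖(2:ℂ) - w‖)) := by
    rw [← norm_inv, key, norm_div, norm_mul, norm_mul, norm_mul, Complex.norm_real,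
      Real.norm_eq_abs, abs_of_pos Real.pi_pos]
  have hG3le : ‖Complex.Gamma (3 - w)‖ ≤ 6 := by
    have hre : (3 - w).re = 3 - w.re := by simp [Complex.sub_re]
    have hpos : 0 < (3 - w).re := by rw [hre]; linarith
    refine (my_abs_Gamma_le _ hpos).trans (my_Gamma_le_six ?_ ?_) <;> rw [hre] <;> linarith
  have ha : 0 < ‖(1:ℂ) - w‖ := norm_pos_iff.2 h1w
  have hb : 0 < ‖(2:ℂ) - w‖ := norm_pos_iff.2 h2w
  have hs0 : 0 ≤ ‖Complex.sin (↑Real.pi * w)‖ := norm_nonneg _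
  have hEpos : 0 < Real.exp (Real.pi * |w.im|) := Real.exp_pos _
  set E := Real.exp (Real.pi * |w.im|)
  set a := ‖(1:ℂ) - w‖
  set b := ‖(2:ℂ) - w‖
  by_cases hc : w.re ≤ 3/2
  · have hsb : ‖Complex.sin (↑Real.pi * w)‖ ≤ Real.pi * a * E := by
      have e : Complex.sin (↑Real.pi * w) = - Complex.sin (↑Real.pi * (w - 1)) := by
        rw [show (↑Real.pi : ℂ) * (w - 1) = ↑Real.pi * w - ↑Real.pi by ring,
          Complex.sin_sub_pi]
        ring
      rw [e, norm_neg]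
      refine (my_abs_sin_le' _).trans (le_of_eq ?_)
      have him : (↑Real.pi * (w - 1)).im = Real.pi * w.im := by
        simp [Complex.mul_im, Complex.sub_im]
      rw [him, abs_mul, abs_of_pos Real.pi_pos, norm_mul, Complex.norm_real,
        Real.norm_eq_abs, abs_of_pos Real.pi_pos, norm_sub_rev]
    have hbge : 1/2 ≤ b := by
      have h2re : ((2:ℂ) - w).re = 2 - w.re := by simp [Complex.sub_re]
      calc (1/2:ℝ) ≤ 2 - w.re := by linarith
        _ ≤ |((2:ℂ) - w).re| := by rw [h2re]; exact le_abs_self _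
        _ ≤ b := Complex.abs_re_le_norm _
    rw [hnorm, div_le_iff₀ (by positivity)]
    nlinarith [mul_le_mul hG3le hsb hs0 (by norm_num : (0:ℝ) ≤ 6),
      mul_nonneg (mul_nonneg (mul_nonneg (sub_nonneg.2 hbge) hEpos.le) Real.pi_pos.le) ha.le,
      Real.pi_pos]
  · push_neg at hc
    have hsb : ‖Complex.sin (↑Real.pi * w)‖ ≤ Real.pi * b * E := by
      have e : Complex.sin (↑Real.pi * w) = Complex.sin (↑Real.pi * (w - 2)) := by
        rw [show (↑Real.pi : ℂ) * (w - 2) = ↑Real.pi * w - 2 * ↑Real.pi by ring,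
          Complex.sin_sub_two_pi]
      rw [e]
      refine (my_abs_sin_le' _).trans (le_of_eq ?_)
      have him : (↑Real.pi * (w - 2)).im = Real.pi * w.im := by
        simp [Complex.mul_im, Complex.sub_im]
      rw [him, abs_mul, abs_of_pos Real.pi_pos, norm_mul, Complex.norm_real,
        Real.norm_eq_abs, abs_of_pos Real.pi_pos, norm_sub_rev]
    have hage : 1/2 ≤ a := by
      have h1re : ((1:ℂ) - w).re = 1 - w.re := by simp [Complex.sub_re]
      calc (1/2:ℝ) ≤ w.re - 1 := by linarith
        _ ≤ |((1:ℂ) - w).re| := by rw [h1re, abs_sub_comm]; exact le_abs_self _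
        _ ≤ a := Complex.abs_re_le_norm _
    rw [hnorm, div_le_iff₀ (by positivity)]
    nlinarith [mul_le_mul hG3le hsb hs0 (by norm_num : (0:ℝ) ≤ 6),
      mul_nonneg (mul_nonneg (mul_nonneg (sub_nonneg.2 hage) hEpos.le) Real.pi_pos.le) hb.le,
      Real.pi_pos]

lemma my_rec (n : ℕ) : ∀ w : ℂ, -(1/2:ℝ) ≤ w.re → w.re ≤ (n:ℝ) + 2 →
    ‖Complex.Gamma w‖⁻¹ ≤ 12 * Real.exp (Real.pi * |w.im|) := by
  induction n with
  | zero => intro w hA hB; exact my_strip_bound w hA (by simpa using hB)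
  | succ n ih =>
    intro w hA hB
    by_cases hc : w.re ≤ (n:ℝ) + 2
    · exact ih w hA hc
    push_neg at hc
    have hre : (w - 1).re = w.re - 1 := by simp [Complex.sub_re]
    have him : (w - 1).im = w.im := by simp [Complex.sub_im]
    have hge2 : (2:ℝ) ≤ w.re := by
      have : (0:ℝ) ≤ (n:ℝ) := Nat.cast_nonneg n
      linarith
    have hw1 : w - 1 ≠ 0 := by
      intro h
      have : (w - 1).re = 0 := by rw [h]; simp
      rw [hre] at this; linarith
    have hg : Complex.Gamma w = (w - 1) * Complex.Gamma (w - 1) := by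
      have := Complex.Gamma_add_one (w - 1) hw1
      rwa [show w - 1 + 1 = w by ring] at this
    have hA' : -(1/2:ℝ) ≤ (w - 1).re := by rw [hre]; linarith
    have hB' : (w - 1).re ≤ (n:ℝ) + 2 := by
      rw [hre]; push_cast at hB; linarith
    have ihw := ih (w - 1) hA' hB'
    rw [him] at ihw
    have hnw : 1 ≤ ‖w - 1‖ := by
      calc (1:ℝ) ≤ (w - 1).re := by rw [hre]; linarith
        _ ≤ |(w - 1).re| := le_abs_self _
        _ ≤ ‖w - 1‖ := Complex.abs_re_le_norm _
    rw [hg, norm_mul, mul_inv]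
    calc ‖w - 1‖⁻¹ * ‖Complex.Gamma (w - 1)‖⁻¹
        ≤ 1 * ‖Complex.Gamma (w - 1)‖⁻¹ := by
          apply mul_le_mul_of_nonneg_right _ (inv_nonneg.2 (norm_nonneg _))
          exact inv_le_one_of_one_le₀ hnw
      _ = ‖Complex.Gamma (w - 1)‖⁻¹ := one_mul _
      _ ≤ _ := ihw

theorem gamma_reciprocal_bound :
    ∃ C > 0, ∀ β : ℂ, -1 ≤ β.re →
      ‖Complex.Gamma (β + 1/2)‖⁻¹ ≤ C * Real.exp (Real.pi * |β.im|) := by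
  refine ⟨12, by norm_num, fun β hβ => ?_⟩
  set w := β + 1/2 with hw
  have hre : w.re = β.re + 1/2 := by simp [hw]
  have him : w.im = β.im := by simp [hw]
  obtain ⟨n, hn⟩ := exists_nat_ge w.re
  have := my_rec n w (by rw [hre]; linarith) (by linarith)
  rwa [him] at this
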